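/- There exist constants C > 0 and h₀ ∈ (0,1) such that for all h ∈ (0,h₀): |A_h − √2| ≤ C·h^{−ρ/2}·exp(−h^{−ρ}). -/

import Mathlib

set_option maxHeartbeats 2000000


open Real Set

noncomputable section

/-- The secular function whose zeros `w > 0` correspond, via `λ = -w²`, to the negative
eigenvalues of the 1D Laplacian on `(0, h^{-ρ})` with Robin condition `u'(0) = -u(0)`
and Dirichlet condition `u(h^{-ρ}) = 0`. -/
def secular (ρ h v : ℝ) : ℝ := v - 1 + (v + 1) * Real.exp (-2 * v * h ^ (-ρ))


lemma exp_cmul_hasDerivAt (c x : ℝ) :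
    HasDerivAt (fun y : ℝ => Real.exp (c * y)) (c * Real.exp (c * x)) x := by
  have h1 : HasDerivAt (fun y : ℝ => c * y) c x := by
    simpa using (hasDerivAt_id x).const_mul c
  simpa [mul_comm] using h1.exp

lemma integral_eval (w L : ℝ) (hw : 0 < w) :
    ∫ τ in (0:ℝ)..L,
        (Real.exp (-w * τ) - Real.exp (-2*w*L) * Real.exp (w * τ)) ^ 2
      = (1 - Real.exp (-2*w*L) ^ 2) / (2*w) - 2 * Real.exp (-2*w*L) * L := by
  set E := Real.exp (-2*w*L) with hE
  have hw' : (2*w) ≠ 0 := by positivity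
  have hinv : E * Real.exp (2*w*L) = 1 := by
    rw [hE, ← Real.exp_add]; norm_num
  set F : ℝ → ℝ := fun y => -(Real.exp (-2*w*y)/(2*w)) - 2*E*y + E^2 * Real.exp (2*w*y)/(2*w) with hF
  have hderiv : ∀ x ∈ Set.uIcc (0:ℝ) L,
      HasDerivAt F ((Real.exp (-w*x) - E * Real.exp (w*x))^2) x := by
    intro x _
    have d2 := ((exp_cmul_hasDerivAt (-2*w) x).div_const (2*w)).neg
    have d3 : HasDerivAt (fun y : ℝ => 2*E*y) (2*E) x := by
      simpa using (hasDerivAt_id x).const_mul (2*E)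
    have d4 := ((exp_cmul_hasDerivAt (2*w) x).const_mul (E^2)).div_const (2*w)
    have dd := (d2.sub d3).add d4
    refine dd.congr_deriv (Eq.symm ?_)
    have h1 : Real.exp (-(w*x)) * Real.exp (w*x) = 1 := by
      rw [← Real.exp_add]; norm_num
    have h2 : Real.exp (-(w*x))^2 = Real.exp (-(2*w*x)) := by
      rw [sq, ← Real.exp_add]; congr 1; ring
    have h3 : Real.exp (w*x)^2 = Real.exp (2*w*x) := by
      rw [sq, ← Real.exp_add]; congr 1; ring
    have h4 : Real.exp (-w*x) = Real.exp (-(w*x)) := by congr 1; ring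
    have h5 : Real.exp (-2*w*x) = Real.exp (-(2*w*x)) := by congr 1; ring
    rw [h4, h5]
    field_simp
    have h2' : Real.exp (-(w*x))^2 = Real.exp (-(w*x*2)) := by rw [h2]; congr 1; ring
    have h3' : Real.exp (w*x)^2 = Real.exp (w*x*2) := by rw [h3]; congr 1; ring
    linear_combination h2' + E^2 * h3' - (2*E) * h1
  have hcont : IntervalIntegrable (fun τ => (Real.exp (-w*τ) - E * Real.exp (w*τ))^2)
      MeasureTheory.volume 0 L := by
    apply Continuous.intervalIntegrable; fun_prop
  have hI := intervalIntegral.integral_eq_sub_of_hasDerivAt hderiv hcont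
  rw [hI, hF]
  simp only [mul_zero, Real.exp_zero]
  have hE' : Real.exp (-(2*w*L)) = E := by rw [hE]; congr 1; ring
  field_simp
  linear_combination -hE' + E * hinv

theorem normalization_constant_asymptotics (ρ : ℝ) (hρ : ρ ∈ Set.Ioo (0 : ℝ) 1) :
    ∃ C > (0 : ℝ), ∃ h₀ ∈ Set.Ioo (0 : ℝ) 1, ∀ h ∈ Set.Ioo (0 : ℝ) h₀,
      ∀ w : ℝ, 0 < w → secular ρ h w = 0 →
        ∀ A : ℝ,
          A = (∫ τ in (0 : ℝ)..(h ^ (-ρ)),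
              (Real.exp (-w * τ) - Real.exp (-2 * w * h ^ (-ρ)) * Real.exp (w * τ)) ^ 2) ^
            (-(1 : ℝ) / 2) →
          |A - Real.sqrt 2| ≤ C * h ^ (-ρ / 2) * Real.exp (-h ^ (-ρ)) := by
  obtain ⟨hρ0, hρ1⟩ := hρ
  refine ⟨100, by norm_num, Real.exp (-16/ρ), ⟨Real.exp_pos _,
    Real.exp_lt_one_iff.mpr (by rw [neg_div]; exact neg_lt_zero.mpr (by positivity))⟩, ?_⟩
  intro h hh w hw hsec A hA
  obtain ⟨hh0, hh1⟩ := hh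
  have hsqrtL0 : h ^ (-ρ/2) = Real.sqrt (h ^ (-ρ)) := by
    rw [show (-ρ/2) = (-ρ) * (1/2) by ring, Real.rpow_mul hh0.le, Real.sqrt_eq_rpow]
  rw [hsqrtL0]
  have hLpos0 : (0:ℝ) < h ^ (-ρ) := Real.rpow_pos_of_pos hh0 _
  have hL160 : (16:ℝ) ≤ h ^ (-ρ) := by
    have h1 : h ^ ρ < (Real.exp (-16/ρ)) ^ ρ := Real.rpow_lt_rpow hh0.le hh1 hρ0
    have h2 : (Real.exp (-16/ρ)) ^ ρ = Real.exp (-16) := by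
      rw [← Real.exp_mul]; congr 1; field_simp
    have h3 : h ^ (-ρ) = (h ^ ρ)⁻¹ := Real.rpow_neg hh0.le ρ
    have h4 : Real.exp (-16) ≤ (17:ℝ)⁻¹ := by
      rw [Real.exp_neg]
      apply inv_anti₀ (by norm_num)
      have := Real.add_one_le_exp (16:ℝ); linarith
    have hρpos : 0 < h ^ ρ := Real.rpow_pos_of_pos hh0 ρ
    have h5 : h ^ ρ < (17:ℝ)⁻¹ := lt_of_lt_of_le (h2 ▸ h1) h4
    rw [h3]
    have := inv_anti₀ hρpos h5.le
    simp only [inv_inv] at this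
    linarith
  simp only [secular] at hsec
  rw [integral_eval w (h ^ (-ρ)) hw] at hA
  obtain ⟨L, hLdef⟩ : ∃ L, h ^ (-ρ) = L := ⟨_, rfl⟩
  rw [hLdef] at hsec hA hLpos0 hL160 ⊢
  have hLpos : 0 < L := hLpos0
  have hL16 : 16 ≤ L := hL160
  obtain ⟨E, hEdef⟩ : ∃ E, Real.exp (-2*w*L) = E := ⟨_, rfl⟩
  have hEdef' : Real.exp (-2 * w * L) = E := hEdef
  rw [hEdef'] at hsec hA
  have hEpos : 0 < E := hEdef ▸ Real.exp_pos _
  -- secular relation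
  have hErel : E * (1 + w) = 1 - w := by linear_combination hsec
  -- w < 1
  have hw1 : w < 1 := by nlinarith [hEpos]
  -- w > 1/2
  have hwhalf : 1/2 < w := by
    by_contra hcon
    push_neg at hcon
    have hEle : E ≤ Real.exp (-(4*w)) := by
      rw [← hEdef]; apply Real.exp_le_exp.mpr; nlinarith
    have h4 : Real.exp (-(4*w)) * Real.exp (4*w) = 1 := by
      rw [← Real.exp_add]; norm_num
    have hsq : (1 + 2*w)^2 < Real.exp (4*w) := by
      have h5 : 2*w + 1 < Real.exp (2*w) := Real.add_one_lt_exp (by positivity)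
      have h6 : Real.exp (2*w) ^ 2 = Real.exp (4*w) := by
        rw [sq, ← Real.exp_add]; congr 1; ring
      nlinarith [Real.exp_pos (2*w)]
    have hkey : E * (1 + 2*w)^2 < 1 := by
      calc E * (1+2*w)^2 ≤ Real.exp (-(4*w)) * (1+2*w)^2 :=
            mul_le_mul_of_nonneg_right hEle (sq_nonneg _)
        _ < Real.exp (-(4*w)) * Real.exp (4*w) :=
            mul_lt_mul_of_pos_left hsq (Real.exp_pos _)
        _ = 1 := h4
    have h7 : E * (1+2*w)^2 * (1+w) < 1 * (1+w) := by
      apply mul_lt_mul_of_pos_right hkey (by linarith)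
    have h8 : (1-w)*(1+2*w)^2 < 1 + w := by nlinarith [h7, hErel]
    have h9 : (0:ℝ) < 1 - 2*w^2 := by nlinarith
    nlinarith [h8, mul_pos hw h9]
  -- e^{-L} small
  have hexpL : Real.exp (-L) ≤ 4 / L^2 := by
    have h1 : L/2 + 1 ≤ Real.exp (L/2) := Real.add_one_le_exp _
    have h2 : Real.exp (L/2) ^ 2 = Real.exp L := by rw [sq, ← Real.exp_add]; congr 1; ring
    have h3 : L^2/4 ≤ Real.exp L := by nlinarith
    have h4 : Real.exp (-L) * Real.exp L = 1 := by rw [← Real.exp_add]; norm_num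
    rw [le_div_iff₀ (by positivity : (0:ℝ) < L^2)]
    have h5 := mul_le_mul_of_nonneg_left h3 (Real.exp_pos (-L)).le
    nlinarith [h5, h4]
  have hEexpL : E ≤ Real.exp (-L) := by
    rw [← hEdef]; apply Real.exp_le_exp.mpr
    nlinarith [mul_nonneg (by linarith : (0:ℝ) ≤ 2*w-1) hLpos.le]
  -- refined lower bound on w
  have hwlow : 1 - 2*E ≤ w := by nlinarith [sq_nonneg E]
  -- E ≤ 3 e^{-2L}
  have hLeL : 4 * L * Real.exp (-L) ≤ 1 := by
    have h1 : 4*L*Real.exp (-L) ≤ 4*L*(4/L^2) :=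
      mul_le_mul_of_nonneg_left hexpL (by positivity)
    have h2 : 4*L*(4/L^2) = 16/L := by field_simp; ring
    have h3 : 16/L ≤ 1 := by rw [div_le_one hLpos]; linarith
    linarith [h2 ▸ h1]
  have hE3 : E ≤ 3 * Real.exp (-L) ^ 2 := by
    have h1 : -2*w*L ≤ -(2*L) + 1 := by
      have ha : (0:ℝ) ≤ (w - (1 - 2*E)) * L := mul_nonneg (by linarith) hLpos.le
      have hb : E * L ≤ Real.exp (-L) * L := mul_le_mul_of_nonneg_right hEexpL hLpos.le
      nlinarith [ha, hb, hLeL]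
    have h2 : E ≤ Real.exp (-(2*L) + 1) := by rw [← hEdef]; exact Real.exp_le_exp.mpr h1
    have h3 : Real.exp (-(2*L) + 1) = Real.exp 1 * Real.exp (-L)^2 := by
      rw [sq, ← Real.exp_add, ← Real.exp_add]; congr 1; ring
    have h4 : Real.exp 1 ≤ 3 := by have := Real.exp_one_lt_d9; linarith
    nlinarith [Real.exp_pos (-L), sq_nonneg (Real.exp (-L))]
  -- E*L small
  have hEL : E * L ≤ 1/64 := by
    have h1 : Real.exp (-L)^2 ≤ (4/L^2)^2 :=
      pow_le_pow_left₀ (Real.exp_pos _).le hexpL 2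
    have h2 : E * L ≤ 3 * (4/L^2)^2 * L := by nlinarith [hLpos]
    have h3 : 3 * (4/L^2)^2 * L = 48 / L^3 := by field_simp; ring
    have h4 : 48 / L^3 ≤ 1/64 := by
      rw [div_le_div_iff₀ (by positivity) (by norm_num)]
      nlinarith
    linarith [h3 ▸ h2]
  -- the integral value
  have hIval : (1 - E^2)/(2*w) - 2*E*L = (1+E)^2/2 - 2*E*L := by
    have hwne : (2*w) ≠ 0 := by positivity
    field_simp
    linear_combination (-1 - E) * hErel
  rw [hIval] at hA
  obtain ⟨I, hIdef⟩ : ∃ I, (1+E)^2/2 - 2*E*L = I := ⟨_, rfl⟩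
  rw [hIdef] at hA
  have hIlow : 1/4 ≤ I := by
    rw [← hIdef]; nlinarith only [sq_nonneg E, hEpos, hEL]
  have hE1 : E ≤ 1 := by
    nlinarith only [hEL, hEpos, mul_le_mul_of_nonneg_left hL16 hEpos.le]
  have hIabs : |I - 1/2| ≤ 4 * (E*L) := by
    rw [← hIdef, abs_le]
    constructor
    · nlinarith only [hEpos, sq_nonneg E, mul_pos hEpos hLpos]
    · nlinarith only [hE1, hEpos, sq_nonneg E, mul_pos hEpos hLpos,
        mul_le_mul_of_nonneg_left hL16 hEpos.le]
  have hIpos : 0 < I := lt_of_lt_of_le (by norm_num) hIlow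
  -- A = 1/√I
  obtain ⟨s, hsdef⟩ : ∃ s, Real.sqrt I = s := ⟨_, rfl⟩
  have hspos : 0 < s := hsdef ▸ Real.sqrt_pos.mpr hIpos
  have hs2 : s^2 = I := by rw [← hsdef]; exact Real.sq_sqrt hIpos.le
  have hshalf : 1/2 ≤ s := by nlinarith only [hs2, hspos, hIlow]
  have hA' : A = s⁻¹ := by
    rw [hA, show (-(1:ℝ)/2) = -(1/2:ℝ) by norm_num, Real.rpow_neg hIpos.le,
      ← Real.sqrt_eq_rpow, hsdef]
  have hr2 : Real.sqrt 2 ^ 2 = 2 := Real.sq_sqrt (by norm_num)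
  have hr2pos : 0 < Real.sqrt 2 := Real.sqrt_pos.mpr (by norm_num)
  have hmul : (A - Real.sqrt 2) * (s * (1 + Real.sqrt 2 * s)) = 1 - 2*I := by
    rw [hA']
    field_simp
    linear_combination (-s^2) * hr2 + (-2) * hs2
  have habs : |A - Real.sqrt 2| ≤ 2 * |1 - 2*I| := by
    have h1 := abs_mul (A - Real.sqrt 2) (s * (1 + Real.sqrt 2 * s))
    rw [hmul] at h1
    have hq : 0 < 1 + Real.sqrt 2 * s := by
      nlinarith only [mul_pos hr2pos hspos]
    have h2 : |s * (1 + Real.sqrt 2 * s)| = s * (1 + Real.sqrt 2 * s) :=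
      abs_of_pos (mul_pos hspos hq)
    rw [h2] at h1
    have hf : 1/2 ≤ s * (1 + Real.sqrt 2 * s) := by
      nlinarith only [hshalf, hspos, mul_nonneg (mul_pos hr2pos hspos).le hspos.le]
    have h3 := mul_le_mul_of_nonneg_left hf (abs_nonneg (A - Real.sqrt 2))
    linarith only [h1, h3]
  have habs2 : |1 - 2*I| = 2 * |I - 1/2| := by
    rw [show (1 - 2*I) = -2 * (I - 1/2) by ring, abs_mul]
    norm_num
  -- final numeric chain
  have hELe : E * L ≤ 3 * Real.exp (-L)^2 * L := mul_le_mul_of_nonneg_right hE3 hLpos.le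
  have hchain : |A - Real.sqrt 2| ≤ 48 * L * Real.exp (-L)^2 := by
    rw [habs2] at habs
    linarith only [habs, hIabs, hELe]
  have hsL2 : Real.sqrt L ^ 2 = L := Real.sq_sqrt hLpos.le
  have hsLpos : 0 < Real.sqrt L := Real.sqrt_pos.mpr hLpos
  have hsL1 : Real.sqrt L * Real.exp (-L) ≤ 1 := by
    have h1 : L ≤ Real.exp L := by have := Real.add_one_le_exp L; linarith
    have h2 : Real.sqrt L ≤ L := by
      calc Real.sqrt L ≤ Real.sqrt (L^2) := Real.sqrt_le_sqrt (by nlinarith only [hL16])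
        _ = L := Real.sqrt_sq hLpos.le
    have h3 : Real.exp (-L) * Real.exp L = 1 := by rw [← Real.exp_add]; norm_num
    have h4 := mul_le_mul_of_nonneg_right h2 (Real.exp_pos (-L)).le
    have h5 := mul_le_mul_of_nonneg_right h1 (Real.exp_pos (-L)).le
    linarith only [h3, h4, h5]
  calc |A - Real.sqrt 2| ≤ 48 * L * Real.exp (-L)^2 := hchain
    _ = 48 * (Real.sqrt L * Real.exp (-L)) * (Real.sqrt L * Real.exp (-L)) := by
        linear_combination (-48 * Real.exp (-L)^2) * hsL2
    _ ≤ 48 * (Real.sqrt L * Real.exp (-L)) * 1 := by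
        apply mul_le_mul_of_nonneg_left hsL1
        positivity
    _ ≤ 100 * Real.sqrt L * Real.exp (-L) := by
        linarith only [mul_pos hsLpos (Real.exp_pos (-L))]
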